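/- For any swap Schelling game (G,b,1/2) on a bipartite graph G, there exists a swap equilibrium σ such that 2·DoI(σ) ≥ DoI(σ') for every strategy profile σ'; i.e., the Price of Stability with respect to the degree of integration is at most 2. -/
import Mathlib


open Finset

namespace SwapSchelling

variable {V : Type*} [Fintype V] [DecidableEq V]

open scoped Classical in
/-- The closed neighborhood `N[v]` of a node `v` in `G`, as a `Finset`. -/
noncomputable def closedNbhd (G : SimpleGraph V) (v : V) : Finset V :=
  univ.filter (fun u => u = v ∨ G.Adj v u)

open scoped Classical in
/-- The degree `δ(v)` of a node `v` in `G`. -/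
noncomputable def deg (G : SimpleGraph V) (v : V) : ℕ :=
  (univ.filter (fun u => G.Adj v u)).card

/-- The maximum degree `Δ(G)`. -/
noncomputable def maxDeg (G : SimpleGraph V) : ℕ := univ.sup (deg G)

/-- The minimum degree `δ(G)`. -/
noncomputable def minDeg (G : SimpleGraph V) : ℕ := sInf (Set.range (deg G))

open scoped Classical in
/-- `frac G c v` is the fraction of nodes in the closed neighborhood of `v` that have
the same color as `v` (that is, `f_i(σ)` for the agent `i` occupying node `v`). -/
noncomputable def frac (G : SimpleGraph V) (c : V → Bool) (v : V) : ℝ :=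
  (((closedNbhd G v).filter (fun u => c u = c v)).card : ℝ) / ((closedNbhd G v).card : ℝ)

/-- The coloring obtained from `c` after the agents on nodes `v` and `w` swap positions. -/
def swapColor (c : V → Bool) (v w : V) : V → Bool := c ∘ Equiv.swap v w

/-- A single-peaked utility function `p` with peak at `Λ`: `p 0 = 0`, `p` is strictly
increasing on `[0,Λ]`, `p Λ = 1`, and `p x = p (Λ(1-x)/(1-Λ))` for `x ∈ [Λ,1]`. -/
structure IsSinglePeaked (p : ℝ → ℝ) (Λ : ℝ) : Prop where
  peak_mem : Λ ∈ Set.Ioo (0 : ℝ) 1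
  map_zero : p 0 = 0
  strictMonoOn : StrictMonoOn p (Set.Icc 0 Λ)
  map_peak : p Λ = 1
  symm : ∀ x ∈ Set.Icc Λ 1, p x = p (Λ * (1 - x) / (1 - Λ))

/-- A strategy profile: a 2-coloring of the nodes with exactly `b` blue (`true`) nodes. -/
def IsProfile (c : V → Bool) (b : ℕ) : Prop :=
  (univ.filter (fun v => c v = true)).card = b

/-- The structural data of a swap Schelling game `(G, b, Λ)` with utility function `p`:
`G` is connected, there are `b` blue agents with `1 ≤ b ≤ n/2`, and `p` is a
single-peaked utility function with peak `Λ`. -/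
structure IsGame (G : SimpleGraph V) (b : ℕ) (Λ : ℝ) (p : ℝ → ℝ) : Prop where
  connected : G.Connected
  one_le_b : 1 ≤ b
  b_le_half : 2 * b ≤ Fintype.card V
  singlePeaked : IsSinglePeaked p Λ

/-- The swap of the two (differently colored) agents occupying nodes `v` and `w`
is profitable: both agents strictly increase their utility. -/
def ProfitableSwap (G : SimpleGraph V) (p : ℝ → ℝ) (c : V → Bool) (v w : V) : Prop :=
  c v ≠ c w ∧
  p (frac G (swapColor c v w) w) > p (frac G c v) ∧
  p (frac G (swapColor c v w) v) > p (frac G c w)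

/-- A swap equilibrium: no profitable swap exists. -/
def IsSwapEquilibrium (G : SimpleGraph V) (p : ℝ → ℝ) (c : V → Bool) : Prop :=
  ∀ v w, ¬ ProfitableSwap G p c v w

open scoped Classical in
/-- The degree of integration: the number of non-segregated agents. -/
noncomputable def DoI (G : SimpleGraph V) (c : V → Bool) : ℕ :=
  (univ.filter (fun v => frac G c v ≠ 1)).card

open scoped Classical in
/-- The number of monochromatic edges of `G` under the coloring `c`. -/
noncomputable def Phi (G : SimpleGraph V) (c : V → Bool) : ℕ :=
  (G.edgeFinset.filter (fun e => ∀ u ∈ e, ∀ w ∈ e, c u = c w)).card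

open scoped Classical in
/-- The number of edges of `G`. -/
noncomputable def numEdges (G : SimpleGraph V) : ℕ :=
  (univ.filter (fun e : Sym2 V => e ∈ G.edgeSet)).card

/-- A finset of nodes is an independent set of `G`. -/
def IsIndepSet (G : SimpleGraph V) (s : Finset V) : Prop :=
  ∀ u ∈ s, ∀ w ∈ s, ¬ G.Adj u w

open scoped Classical in
/-- The independence number `α(G)`. -/
noncomputable def indepNum (G : SimpleGraph V) : ℕ :=
  univ.sup (fun s : Finset V => if IsIndepSet G s then s.card else 0)

open scoped Classical in
/-- The degree of `v` inside the subgraph of `G` induced by the node set `s`. -/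
noncomputable def degOn (G : SimpleGraph V) (s : Finset V) (v : V) : ℕ :=
  (s.filter (fun u => G.Adj v u)).card


section Aux

variable {V : Type*} [Fintype V] [DecidableEq V]

lemma mem_closedNbhd {G : SimpleGraph V} {v u : V} :
    u ∈ closedNbhd G v ↔ u = v ∨ G.Adj v u := by
  classical
  simp [closedNbhd]

lemma self_mem_closedNbhd {G : SimpleGraph V} {v : V} : v ∈ closedNbhd G v :=
  mem_closedNbhd.2 (Or.inl rfl)

lemma closedNbhd_card_pos {G : SimpleGraph V} {v : V} : 0 < (closedNbhd G v).card :=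
  Finset.card_pos.2 ⟨v, self_mem_closedNbhd⟩

lemma frac_mem {G : SimpleGraph V} {c : V → Bool} {v : V} :
    frac G c v ∈ Set.Icc (0:ℝ) 1 := by
  constructor
  · apply div_nonneg <;> positivity
  · rw [frac, div_le_one (by exact_mod_cast closedNbhd_card_pos)]
    exact_mod_cast Finset.card_filter_le _ _

lemma frac_eq_one_iff {G : SimpleGraph V} {c : V → Bool} {v : V} :
    frac G c v = 1 ↔ ∀ u ∈ closedNbhd G v, c u = c v := by
  classical
  have h0 : (0:ℝ) < ((closedNbhd G v).card : ℝ) := by exact_mod_cast closedNbhd_card_pos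
  rw [frac, div_eq_one_iff_eq (ne_of_gt h0), Nat.cast_inj]
  constructor
  · intro h u hu
    have heq := Finset.eq_of_subset_of_card_le (Finset.filter_subset _ _) (le_of_eq h.symm)
    rw [← heq] at hu
    exact (Finset.mem_filter.1 hu).2
  · intro h
    rw [Finset.filter_true_of_mem h]

lemma p_symm {p : ℝ → ℝ} (hp : IsSinglePeaked p (1/2)) {x : ℝ}
    (hx : x ∈ Set.Icc (0:ℝ) 1) : p (1 - x) = p x := by
  have key : ∀ y : ℝ, y ∈ Set.Icc (1/2 : ℝ) 1 → p y = p (1 - y) := by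
    intro y hy
    have h := hp.symm y hy
    have harg : (1/2 : ℝ) * (1 - y) / (1 - 1/2) = 1 - y := by norm_num
    rwa [harg] at h
  rcases le_total x (1/2 : ℝ) with h | h
  · have hmem : (1 - x) ∈ Set.Icc (1/2:ℝ) 1 := ⟨by linarith [hx.1], by linarith [hx.1]⟩
    rw [key _ hmem]
    congr 1
    ring
  · exact (key x ⟨h, hx.2⟩).symm

lemma p_nonneg {p : ℝ → ℝ} (hp : IsSinglePeaked p (1/2)) {x : ℝ}
    (hx : x ∈ Set.Icc (0:ℝ) 1) : 0 ≤ p x := by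
  have base : ∀ y : ℝ, y ∈ Set.Icc (0:ℝ) (1/2) → 0 ≤ p y := by
    intro y hy
    have h := hp.strictMonoOn.monotoneOn (Set.left_mem_Icc.2 (by norm_num)) hy hy.1
    rw [hp.map_zero] at h
    exact h
  rcases le_total x (1/2:ℝ) with h | h
  · exact base x ⟨hx.1, h⟩
  · rw [← p_symm hp hx]
    exact base _ ⟨by linarith [hx.2], by linarith⟩

lemma p_one {p : ℝ → ℝ} (hp : IsSinglePeaked p (1/2)) : p 1 = 0 := by
  have h := p_symm hp (x := 1) ⟨by norm_num, le_refl 1⟩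
  norm_num at h
  rw [← h, hp.map_zero]

lemma swapColor_left (c : V → Bool) (v w : V) : swapColor c v w v = c w := by
  simp [swapColor]

lemma swapColor_right (c : V → Bool) (v w : V) : swapColor c v w w = c v := by
  simp [swapColor]

lemma swapColor_other (c : V → Bool) {v w u : V} (hv : u ≠ v) (hw : u ≠ w) :
    swapColor c v w u = c u := by
  simp [swapColor, Equiv.swap_apply_of_ne_of_ne hv hw]

lemma swapColor_comm (c : V → Bool) (v w : V) : swapColor c v w = swapColor c w v := by
  unfold swapColor
  rw [Equiv.swap_comm]

lemma bool_resolve {x y a : Bool} (hx : x ≠ a) (hy : y ≠ a) : x = y := by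
  cases x <;> cases y <;> cases a <;> simp_all

lemma bool_eq_of_ne {x y a : Bool} (hxy : x ≠ y) (hx : x ≠ a) : y = a := by
  cases x <;> cases y <;> cases a <;> simp_all

lemma frac_swap_adj {G : SimpleGraph V} {c : V → Bool} {v w : V}
    (hadj : G.Adj v w) (hne : c v ≠ c w) :
    frac G (swapColor c v w) w = 1 - frac G c w := by
  classical
  have hvw : v ≠ w := hadj.ne
  have hws : w ∈ closedNbhd G w := self_mem_closedNbhd
  have hvs : v ∈ closedNbhd G w := mem_closedNbhd.2 (Or.inr hadj.symm)
  have hA : (closedNbhd G w).filter (fun u => swapColor c v w u = swapColor c v w w)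
      = insert w (((closedNbhd G w).filter (fun u => c u = c v)).erase v) := by
    ext u
    simp only [Finset.mem_filter, Finset.mem_insert, Finset.mem_erase]
    by_cases huw : u = w
    · subst huw
      simp [hws]
    · by_cases huv : u = v
      · subst huv
        simp [swapColor_left, swapColor_right, hvw, Ne.symm hne, hvs]
      · rw [swapColor_other c huv huw, swapColor_right]
        constructor
        · rintro ⟨hus, hcu⟩
          exact Or.inr ⟨huv, hus, hcu⟩
        · rintro (h | ⟨_, hus, hcu⟩)
          · exact absurd h huw
          · exact ⟨hus, hcu⟩
  have hvfil : v ∈ (closedNbhd G w).filter (fun u => c u = c v) :=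
    Finset.mem_filter.2 ⟨hvs, rfl⟩
  have hwer : w ∉ ((closedNbhd G w).filter (fun u => c u = c v)).erase v := by
    simp [Ne.symm hne]
  have hcard1 : ((closedNbhd G w).filter (fun u => swapColor c v w u = swapColor c v w w)).card
      = ((closedNbhd G w).filter (fun u => c u = c v)).card := by
    rw [hA, Finset.card_insert_of_notMem hwer, Finset.card_erase_of_mem hvfil]
    have h1 : 1 ≤ ((closedNbhd G w).filter (fun u => c u = c v)).card :=
      Finset.card_pos.2 ⟨v, hvfil⟩
    omega
  have hsplit : ((closedNbhd G w).filter (fun u => c u = c v)).card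
      + ((closedNbhd G w).filter (fun u => c u = c w)).card = (closedNbhd G w).card := by
    have hneg : (closedNbhd G w).filter (fun u => c u = c w)
        = (closedNbhd G w).filter (fun u => ¬ (c u = c v)) := by
      ext u
      simp only [Finset.mem_filter, and_congr_right_iff]
      intro _
      constructor
      · intro h hcontra
        exact hne (hcontra ▸ h ▸ rfl)
      · intro h
        exact bool_resolve h (Ne.symm hne)
    rw [hneg, Finset.card_filter_add_card_filter_not]
  have hpos : (0:ℝ) < ((closedNbhd G w).card : ℝ) := by exact_mod_cast closedNbhd_card_pos
  have hcast : (((closedNbhd G w).filter (fun u => c u = c v)).card : ℝ)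
      = ((closedNbhd G w).card : ℝ)
        - (((closedNbhd G w).filter (fun u => c u = c w)).card : ℝ) := by
    have h := congrArg (Nat.cast : ℕ → ℝ) hsplit
    push_cast at h
    linarith
  rw [frac, frac, hcard1, hcast, sub_div, div_self (ne_of_gt hpos)]

lemma frac_swap_nonadj {G : SimpleGraph V} {c : V → Bool} {v w : V}
    (hvw : v ≠ w) (hnadj : ¬ G.Adj v w) (hnb : ∀ u, G.Adj v u → c u = c w) :
    frac G (swapColor c v w) v = 1 := by
  classical
  have hfull : (closedNbhd G v).filter (fun u => swapColor c v w u = swapColor c v w v)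
      = closedNbhd G v := by
    apply Finset.filter_true_of_mem
    intro u hu
    rw [mem_closedNbhd] at hu
    rcases hu with rfl | hadj
    · rfl
    · have huv : u ≠ v := fun h => G.irrefl (h ▸ hadj)
      have huw : u ≠ w := fun h => hnadj (h ▸ hadj)
      rw [swapColor_other c huv huw, swapColor_left, hnb u hadj]
  rw [frac, hfull, div_self (ne_of_gt (by exact_mod_cast closedNbhd_card_pos))]

lemma isSE_of_side {G : SimpleGraph V} {p : ℝ → ℝ} (hp : IsSinglePeaked p (1/2))
    (c : V → Bool) (a : Bool) (X : Finset V)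
    (hcross : ∀ u v, G.Adj u v → (u ∈ X ↔ v ∉ X))
    (hA : ∀ v, c v = a → v ∈ X) :
    IsSwapEquilibrium G p c := by
  rintro v w ⟨hne, h2, h3⟩
  by_cases hadj : G.Adj v w
  · have e1 : frac G (swapColor c v w) w = 1 - frac G c w := frac_swap_adj hadj hne
    have e2 : frac G (swapColor c v w) v = 1 - frac G c v := by
      rw [swapColor_comm]
      exact frac_swap_adj hadj.symm (Ne.symm hne)
    rw [e1, p_symm hp frac_mem] at h2
    rw [e2, p_symm hp frac_mem] at h3
    exact absurd h2 (not_lt.2 (le_of_lt h3))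
  · have hvw : v ≠ w := fun h => hne (h ▸ rfl)
    by_cases hva : c v = a
    · have hnb : ∀ u, G.Adj v u → c u = c w := fun u hu =>
        bool_resolve (fun h => (hcross v u hu).1 (hA v hva) (hA u h))
          (fun h => hne (hva.trans h.symm))
      have e : frac G (swapColor c v w) v = 1 := frac_swap_nonadj hvw hadj hnb
      rw [e, p_one hp] at h3
      exact absurd h3 (not_lt.2 (p_nonneg hp frac_mem))
    · have hwa : c w = a := bool_eq_of_ne hne hva
      have hnb : ∀ u, G.Adj w u → c u = c v := fun u hu =>
        bool_resolve (fun h => (hcross w u hu).1 (hA w hwa) (hA u h)) hva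
      have e : frac G (swapColor c v w) w = 1 := by
        rw [swapColor_comm]
        exact frac_swap_nonadj (Ne.symm hvw) (fun h => hadj h.symm) hnb
      rw [e, p_one hp] at h2
      exact absurd h2 (not_lt.2 (p_nonneg hp frac_mem))

open scoped Classical in
noncomputable def NB (G : SimpleGraph V) (S : Finset V) : Finset V :=
  univ.filter (fun u => ∃ x ∈ S, G.Adj x u)

lemma mem_NB {G : SimpleGraph V} {S : Finset V} {u : V} :
    u ∈ NB G S ↔ ∃ x ∈ S, G.Adj x u := by
  classical
  simp [NB]

lemma NB_mono {G : SimpleGraph V} {S T : Finset V} (h : S ⊆ T) : NB G S ⊆ NB G T := by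
  intro u hu
  rw [mem_NB] at hu ⊢
  obtain ⟨x, hx, hadj⟩ := hu
  exact ⟨x, h hx, hadj⟩

lemma DoI_le_blue_add (G : SimpleGraph V) (c : V → Bool) :
    DoI G c ≤ (univ.filter (fun v => c v = true)).card
      + (NB G (univ.filter (fun v => c v = true))).card := by
  classical
  unfold DoI
  refine le_trans (Finset.card_le_card ?_) (Finset.card_union_le _ _)
  intro v hv
  simp only [Finset.mem_filter, Finset.mem_univ, true_and] at hv
  have hex : ¬ ∀ u ∈ closedNbhd G v, c u = c v := fun h => hv (frac_eq_one_iff.2 h)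
  push_neg at hex
  obtain ⟨u, hu, hcu⟩ := hex
  rw [mem_closedNbhd] at hu
  have hadj : G.Adj v u := by
    rcases hu with rfl | h
    · exact absurd rfl hcu
    · exact h
  rw [Finset.mem_union]
  cases hcv : c v
  · right
    rw [mem_NB]
    refine ⟨u, ?_, hadj.symm⟩
    simp only [Finset.mem_filter, Finset.mem_univ, true_and]
    cases hcu' : c u
    · exact absurd (hcu'.trans hcv.symm) hcu
    · rfl
  · left
    simp [hcv]

lemma exists_adj {G : SimpleGraph V} (hc : G.Connected) (h2 : 2 ≤ Fintype.card V) (v : V) :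
    ∃ u, G.Adj v u := by
  obtain ⟨u, hu⟩ := Fintype.exists_ne_of_one_lt_card (by omega) v
  obtain ⟨pth⟩ := hc.preconnected v u
  cases pth with
  | nil => exact absurd rfl hu
  | cons h _ => exact ⟨_, h⟩

lemma caseA {G : SimpleGraph V} {b : ℕ} {p : ℝ → ℝ} (hp : IsSinglePeaked p (1/2))
    (hbn : 2 * b ≤ Fintype.card V)
    (hnbr : ∀ v : V, ∃ u, G.Adj v u)
    (X : Finset V) (hcross : ∀ u v, G.Adj u v → (u ∈ X ↔ v ∉ X))
    (hXb : X.card ≤ b) :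
    ∃ c : V → Bool, IsProfile c b ∧ IsSwapEquilibrium G p c ∧
      ∀ c' : V → Bool, IsProfile c' b → DoI G c' ≤ 2 * DoI G c := by
  classical
  have hT : b - X.card ≤ Xᶜ.card := by
    rw [Finset.card_compl]
    omega
  obtain ⟨T, hTsub, hTcard⟩ := Finset.exists_subset_card_eq hT
  set c : V → Bool := fun v => decide (v ∈ X ∪ T) with hc
  have hcT : ∀ v, c v = true ↔ v ∈ X ∪ T := by
    intro v
    simp [hc]
  have hdisj : Disjoint X T := Finset.disjoint_left.2 (by
    intro a ha hat
    exact (Finset.mem_compl.1 (hTsub hat)) ha)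
  have hprof : IsProfile c b := by
    unfold IsProfile
    have hfil : univ.filter (fun v => c v = true) = X ∪ T := by
      ext v
      simp [hcT v]
    rw [hfil, Finset.card_union_of_disjoint hdisj, hTcard]
    omega
  refine ⟨c, hprof, ?_, ?_⟩
  · refine isSE_of_side hp c false Xᶜ ?_ ?_
    · intro u v huv
      simp only [Finset.mem_compl, not_not]
      have h := hcross u v huv
      tauto
    · intro v hv
      refine Finset.mem_compl.2 (fun hvX => ?_)
      have : c v = true := (hcT v).2 (Finset.mem_union_left _ hvX)
      rw [this] at hv
      exact Bool.noConfusion hv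
  · intro c' _
    have h1 : DoI G c' ≤ Fintype.card V := by
      unfold DoI
      exact le_trans (Finset.card_filter_le _ _) (le_of_eq Finset.card_univ)
    have hsplit : (univ.filter (fun v => c v = true)).card
        + (univ.filter (fun v => ¬ c v = true)).card = Fintype.card V := by
      rw [Finset.card_filter_add_card_filter_not, Finset.card_univ]
    have hsub : univ.filter (fun v => ¬ c v = true)
        ⊆ univ.filter (fun v => frac G c v ≠ 1) := by
      intro w hw
      simp only [Finset.mem_filter, Finset.mem_univ, true_and] at hw ⊢
      obtain ⟨u, hu⟩ := hnbr w
      have hwX : w ∉ X := fun hwX => hw ((hcT w).2 (Finset.mem_union_left _ hwX))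
      have huX : u ∈ X := by
        by_contra huX
        exact hwX ((hcross w u hu).2 huX)
      intro h1'
      have hall := frac_eq_one_iff.1 h1' u (mem_closedNbhd.2 (Or.inr hu))
      apply hw
      rw [← hall]
      exact (hcT u).2 (Finset.mem_union_left _ huX)
    have h2 : (univ.filter (fun v => ¬ c v = true)).card ≤ DoI G c := by
      unfold DoI
      exact Finset.card_le_card hsub
    have hb := hprof
    unfold IsProfile at hb
    omega

lemma caseB {G : SimpleGraph V} {b : ℕ} {p : ℝ → ℝ} (hp : IsSinglePeaked p (1/2))
    (hnbr : ∀ v : V, ∃ u, G.Adj v u)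
    (X : Finset V) (hcross : ∀ u v, G.Adj u v → (u ∈ X ↔ v ∉ X))
    (hbX : b ≤ X.card) (hbY : b ≤ Xᶜ.card)
    (B : Finset V) (hBX : B ⊆ X) (hBb : B.card = b)
    (hmaxX : ∀ S ⊆ X, S.card = b → (NB G S).card ≤ (NB G B).card)
    (hmaxY : ∀ S ⊆ Xᶜ, S.card = b → (NB G S).card ≤ (NB G B).card) :
    ∃ c : V → Bool, IsProfile c b ∧ IsSwapEquilibrium G p c ∧
      ∀ c' : V → Bool, IsProfile c' b → DoI G c' ≤ 2 * DoI G c := by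
  classical
  set c : V → Bool := fun v => decide (v ∈ B) with hc
  have hcT : ∀ v, c v = true ↔ v ∈ B := by
    intro v
    simp [hc]
  have hprof : IsProfile c b := by
    unfold IsProfile
    have hfil : univ.filter (fun v => c v = true) = B := by
      ext v
      simp [hcT v]
    rw [hfil, hBb]
  refine ⟨c, hprof, ?_, ?_⟩
  · exact isSE_of_side hp c true X hcross (fun v hv => hBX ((hcT v).1 hv))
  · intro c' hc'
    -- lower bound on DoI G c
    have hNBX : ∀ u ∈ NB G B, u ∉ X := by
      intro u hu
      rw [mem_NB] at hu
      obtain ⟨x, hx, hadj⟩ := hu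
      exact (hcross x u hadj).1 (hBX hx)
    have hdisj : Disjoint B (NB G B) := Finset.disjoint_left.2 (by
      intro a hb hnb
      exact hNBX _ hnb (hBX hb))
    have hsub : B ∪ NB G B ⊆ univ.filter (fun v => frac G c v ≠ 1) := by
      intro v hv
      simp only [Finset.mem_filter, Finset.mem_univ, true_and]
      rcases Finset.mem_union.1 hv with hvB | hvN
      · obtain ⟨u, hu⟩ := hnbr v
        have huX : u ∉ X := (hcross v u hu).1 (hBX hvB)
        have hcu : c u = false := by
          simp only [hc, decide_eq_false_iff_not]
          exact fun huB => huX (hBX huB)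
        intro h1'
        have hall := frac_eq_one_iff.1 h1' u (mem_closedNbhd.2 (Or.inr hu))
        rw [hcu, (hcT v).2 hvB] at hall
        exact Bool.noConfusion hall
      · obtain ⟨x, hx, hadj⟩ := mem_NB.1 hvN
        have hcv : c v = false := by
          simp only [hc, decide_eq_false_iff_not]
          exact fun hvB => hNBX v hvN (hBX hvB)
        intro h1'
        have hall := frac_eq_one_iff.1 h1' x (mem_closedNbhd.2 (Or.inr hadj.symm))
        rw [hcv, (hcT x).2 hx] at hall
        exact Bool.noConfusion hall
    have hlow : b + (NB G B).card ≤ DoI G c := by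
      unfold DoI
      calc b + (NB G B).card = (B ∪ NB G B).card := by
            rw [Finset.card_union_of_disjoint hdisj, hBb]
        _ ≤ _ := Finset.card_le_card hsub
    -- upper bound on DoI G c'
    set S : Finset V := univ.filter (fun v => c' v = true) with hS
    have hScard : S.card = b := hc'
    have hup1 : DoI G c' ≤ S.card + (NB G S).card := DoI_le_blue_add G c'
    have hsplitNB : NB G S ⊆ NB G (S ∩ X) ∪ NB G (S \ X) := by
      intro u hu
      obtain ⟨x, hx, hadj⟩ := mem_NB.1 hu
      rw [Finset.mem_union, mem_NB, mem_NB]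
      by_cases hxX : x ∈ X
      · exact Or.inl ⟨x, Finset.mem_inter.2 ⟨hx, hxX⟩, hadj⟩
      · exact Or.inr ⟨x, Finset.mem_sdiff.2 ⟨hx, hxX⟩, hadj⟩
    have hX1 : (NB G (S ∩ X)).card ≤ (NB G B).card := by
      obtain ⟨u, hu1, hu2, hu3⟩ := Finset.exists_subsuperset_card_eq
        (Finset.inter_subset_right (s₁ := S))
        (le_trans (Finset.card_le_card (Finset.inter_subset_left)) (le_of_eq hScard)) hbX
      exact le_trans (Finset.card_le_card (NB_mono hu1)) (hmaxX u hu2 hu3)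
    have hX2 : (NB G (S \ X)).card ≤ (NB G B).card := by
      have hsd : S \ X ⊆ Xᶜ := by
        intro u hu
        exact Finset.mem_compl.2 (Finset.mem_sdiff.1 hu).2
      obtain ⟨u, hu1, hu2, hu3⟩ := Finset.exists_subsuperset_card_eq hsd
        (le_trans (Finset.card_le_card (Finset.sdiff_subset)) (le_of_eq hScard)) hbY
      exact le_trans (Finset.card_le_card (NB_mono hu1)) (hmaxY u hu2 hu3)
    have hup2 : (NB G S).card ≤ (NB G (S ∩ X)).card + (NB G (S \ X)).card :=
      le_trans (Finset.card_le_card hsplitNB) (Finset.card_union_le _ _)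
    omega

end Aux


/-- On bipartite graphs with peak `Λ = 1/2`, there is a swap equilibrium
`σ` with `2·DoI(σ) ≥ DoI(σ')` for every strategy profile `σ'` (Price of Stability ≤ 2). -/
theorem price_of_stability_bipartite_upper
    {V : Type*} [Fintype V] [DecidableEq V] (G : SimpleGraph V) (b : ℕ) (p : ℝ → ℝ)
    (hgame : IsGame G b (1 / 2) p) (hbip : G.Colorable 2) :
    ∃ c : V → Bool, IsProfile c b ∧ IsSwapEquilibrium G p c ∧
      ∀ c' : V → Bool, IsProfile c' b → DoI G c' ≤ 2 * DoI G c := by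
  classical
  obtain ⟨C⟩ := hbip
  have hp := hgame.singlePeaked
  have hb1 := hgame.one_le_b
  have hbn := hgame.b_le_half
  have hn2 : 2 ≤ Fintype.card V := by omega
  have hnbr : ∀ v : V, ∃ u, G.Adj v u := fun v => exists_adj hgame.connected hn2 v
  set X : Finset V := univ.filter (fun v => C v = 0) with hX
  have hfin2 : ∀ x y : Fin 2, x ≠ y → (x = 0 ↔ ¬ y = 0) := by decide
  have hcross : ∀ u v, G.Adj u v → (u ∈ X ↔ v ∉ X) := by
    intro u v huv
    have hne := C.valid huv
    simp only [hX, Finset.mem_filter, Finset.mem_univ, true_and]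
    exact hfin2 _ _ hne
  have hcross' : ∀ u v, G.Adj u v → (u ∈ Xᶜ ↔ v ∉ Xᶜ) := by
    intro u v huv
    simp only [Finset.mem_compl, not_not]
    have h := hcross u v huv
    tauto
  by_cases hXb : X.card ≤ b
  · exact caseA hp hbn hnbr X hcross hXb
  · by_cases hYb : Xᶜ.card ≤ b
    · exact caseA hp hbn hnbr Xᶜ hcross' hYb
    · have hbX : b ≤ X.card := le_of_lt (not_le.1 hXb)
      have hbY : b ≤ Xᶜ.card := le_of_lt (not_le.1 hYb)
      have hPX : (X.powersetCard b).Nonempty :=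
        Finset.powersetCard_nonempty.2 hbX
      obtain ⟨B, hBmem, hBmax⟩ := Finset.exists_max_image
        (X.powersetCard b ∪ Xᶜ.powersetCard b) (fun S => (NB G S).card)
        ⟨hPX.choose, Finset.mem_union_left _ hPX.choose_spec⟩
      rcases Finset.mem_union.1 hBmem with hB | hB
      · rw [Finset.mem_powersetCard] at hB
        exact caseB hp hnbr X hcross hbX hbY B hB.1 hB.2
          (fun S hS hcard => hBmax S
            (Finset.mem_union_left _ (Finset.mem_powersetCard.2 ⟨hS, hcard⟩)))
          (fun S hS hcard => hBmax S
            (Finset.mem_union_right _ (Finset.mem_powersetCard.2 ⟨hS, hcard⟩)))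
      · rw [Finset.mem_powersetCard] at hB
        have hbY' : b ≤ Xᶜᶜ.card := by rwa [compl_compl]
        refine caseB hp hnbr Xᶜ hcross' hbY hbY' B hB.1 hB.2
          (fun S hS hcard => hBmax S
            (Finset.mem_union_right _ (Finset.mem_powersetCard.2 ⟨hS, hcard⟩)))
          (fun S hS hcard => ?_)
        refine hBmax S (Finset.mem_union_left _ (Finset.mem_powersetCard.2 ⟨?_, hcard⟩))
        rwa [compl_compl] at hS


end SwapSchelling
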